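/- arXiv:1410.3120 — 2 statements merged into one kernel-verified Lean document; each statement's English description precedes it below -/
import Mathlib

section
/- The function F(z) = min(z, 1) on ℝ₊ satisfies F(z)/F(1/z) = z for all z > 0, and every function G : ℝ₊ → [0,1] satisfying G(z)/G(1/z) = z pointwise satisfies G(z) ≤ min(z,1) for all z > 0. -/
theorem metropolis_function_maximal :
    (∀ z : ℝ, 0 < z → min z 1 / min (1 / z) 1 = z) ∧
    (∀ G : ℝ → ℝ, (∀ z : ℝ, 0 < z → G z ∈ Set.Icc (0 : ℝ) 1) →
      (∀ z : ℝ, 0 < z → G z / G (1 / z) = z) →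
      ∀ z : ℝ, 0 < z → G z ≤ min z 1) := by
  constructor
  · intro z hz
    rcases le_or_gt z 1 with h | h
    · rw [min_eq_left h, min_eq_right (by rw [le_div_iff₀ hz]; linarith),
        div_one]
    · rw [min_eq_right h.le, min_eq_left (by rw [div_le_one hz]; linarith),
        one_div_one_div]
  · intro G hG hsym z hz
    have hne : G (1 / z) ≠ 0 := by
      intro h
      have := hsym z hz
      rw [h, div_zero] at this
      exact hz.ne this
    have hGz : G z = z * G (1 / z) := by
      have h := hsym z hz
      field_simp [hne] at h
      linarith
    refine le_min ?_ (hG z hz).2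
    rw [hGz]
    nlinarith [(hG (1 / z) (by positivity)).2, (hG (1 / z) (by positivity)).1]
end

section
/- Let A be an n×n skew-symmetric matrix with entries bounded by 1 in absolute value, 0 < ε ≤ 1, and let (p(t)) be the Grigoriadis–Khachiyan random process: with Φ(t) = ∑ᵢ exp(ε Uᵢ(t)/2) where U(t+1) = U(t) + A e_{k(t)} and k(t) is sampled with probability p_i(t) = exp(ε Uᵢ(t)/2)/Φ(t), U(0) = 0. Then E[Φ(t+1) | P(t)] ≤ Φ(t)(1 + ε²/6), and hence E[Φ(t)] ≤ n (1 + ε²/6)^t ≤ n exp(tε²/6). -/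
lemma my_exp_le (x : ℝ) (hx : |x| ≤ 1/2) : Real.exp x ≤ 1 + x + (2/3) * x^2 := by
  have h1 : |x| ≤ 1 := hx.trans (by norm_num)
  have hb := Real.exp_bound h1 (n := 3) (by norm_num)
  have hs : ∑ m ∈ Finset.range 3, x ^ m / m.factorial = 1 + x + x^2/2 := by
    norm_num [Finset.sum_range_succ, Nat.factorial]
  rw [hs] at hb
  norm_num [Nat.factorial] at hb
  have h2 : |x|^3 ≤ (1/2) * x^2 := by
    have h3 : |x|^3 = |x| * |x|^2 := by ring
    rw [h3, sq_abs]
    nlinarith [abs_nonneg x, sq_nonneg x]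
  have := abs_le.mp hb
  nlinarith [sq_nonneg x]

lemma gk_step (n : ℕ) (A : Matrix (Fin n) (Fin n) ℝ) (ε : ℝ)
    (hskew : A.transpose = -A) (hbdd : ∀ i k, |A i k| ≤ 1)
    (hε0 : 0 < ε) (hε1 : ε ≤ 1) (t : ℕ) (f : Fin t → Fin n)
    (gkU : ∀ t : ℕ, (Fin t → Fin n) → Fin n → ℝ)
    (hU : ∀ (t : ℕ) (f : Fin (t+1) → Fin n) i,
      gkU (t+1) f i = gkU t (Fin.init f) i + A i (f (Fin.last t))) :
    ∑ k, (Real.exp (ε * gkU t f k / 2) / ∑ i, Real.exp (ε * gkU t f i / 2)) *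
        (∑ i, Real.exp (ε * gkU (t+1) (Fin.snoc f k) i / 2)) ≤
      (∑ i, Real.exp (ε * gkU t f i / 2)) * (1 + ε ^ 2 / 6) := by
  rcases Nat.eq_zero_or_pos n with hn | hn
  · subst hn; simp
  set e : Fin n → ℝ := fun i => Real.exp (ε * gkU t f i / 2) with he
  set Φ : ℝ := ∑ i, e i with hΦ
  have hΦpos : 0 < Φ := Finset.sum_pos (fun i _ => Real.exp_pos _)
    ⟨⟨0, hn⟩, Finset.mem_univ _⟩
  have hA : ∀ i k, A k i = -A i k := by
    intro i k
    have := congrFun (congrFun hskew i) k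
    simpa [Matrix.transpose] using this
  have hsnoc : ∀ k i, gkU (t+1) (Fin.snoc f k) i = gkU t f i + A i k := by
    intro k i
    rw [hU t (Fin.snoc f k) i, Fin.init_snoc, Fin.snoc_last]
  have hinner : ∀ k : Fin n, (∑ i, Real.exp (ε * gkU (t+1) (Fin.snoc f k) i / 2)) =
      ∑ i, e i * Real.exp (ε * A i k / 2) := by
    intro k
    refine Finset.sum_congr rfl fun i _ => ?_
    rw [hsnoc k i, he]
    rw [← Real.exp_add]
    ring_nf
  have hexp : ∀ i k : Fin n, Real.exp (ε * A i k / 2) ≤ 1 + ε * A i k / 2 + ε^2/6 := by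
    intro i k
    have habs : |ε * A i k / 2| ≤ 1/2 := by
      rw [abs_div, abs_mul, abs_of_pos hε0]
      have := hbdd i k
      rw [abs_of_nonneg (by norm_num : (0:ℝ) ≤ 2)]
      nlinarith [abs_nonneg (A i k)]
    have := my_exp_le _ habs
    have hsq : (2/3) * (ε * A i k / 2)^2 ≤ ε^2/6 := by
      have h1 : (A i k)^2 ≤ 1 := by
        have := hbdd i k; nlinarith [abs_nonneg (A i k), sq_abs (A i k)]
      nlinarith [sq_nonneg ε]
    linarith
  have hS : (∑ k, ∑ i, e k * e i * A i k) = 0 := by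
    have h1 : (∑ k, ∑ i, e k * e i * A i k) = ∑ k, ∑ i, e i * e k * A k i :=
      Finset.sum_comm
    have h2 : (∑ k, ∑ i, e i * e k * A k i) = -∑ k, ∑ i, e k * e i * A i k := by
      rw [← Finset.sum_neg_distrib]
      refine Finset.sum_congr rfl fun k _ => ?_
      rw [← Finset.sum_neg_distrib]
      refine Finset.sum_congr rfl fun i _ => ?_
      rw [hA i k]; ring
    linarith [h1.trans h2]
  have hstep1 : ∀ k : Fin n, (∑ i, e i * Real.exp (ε * A i k / 2)) ≤
      Φ * (1 + ε^2/6) + (ε/2) * ∑ i, e i * A i k := by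
    intro k
    have hle : (∑ i, e i * Real.exp (ε * A i k / 2)) ≤
        ∑ i, e i * (1 + ε * A i k / 2 + ε^2/6) := by
      refine Finset.sum_le_sum fun i _ => ?_
      exact mul_le_mul_of_nonneg_left (hexp i k) (Real.exp_pos _).le
    refine hle.trans (le_of_eq ?_)
    rw [hΦ, Finset.sum_mul, Finset.mul_sum, ← Finset.sum_add_distrib]
    exact Finset.sum_congr rfl fun i _ => by ring
  calc ∑ k, (e k / Φ) * (∑ i, Real.exp (ε * gkU (t+1) (Fin.snoc f k) i / 2))
      = ∑ k, (e k / Φ) * (∑ i, e i * Real.exp (ε * A i k / 2)) := by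
        refine Finset.sum_congr rfl fun k _ => by rw [hinner k]
    _ ≤ ∑ k, (e k / Φ) * (Φ * (1 + ε^2/6) + (ε/2) * ∑ i, e i * A i k) := by
        refine Finset.sum_le_sum fun k _ => ?_
        exact mul_le_mul_of_nonneg_left (hstep1 k)
          (div_nonneg (Real.exp_pos _).le hΦpos.le)
    _ = ∑ k, ((e k / Φ) * (Φ * (1 + ε^2/6)) +
          (ε/(2*Φ)) * ∑ i, e k * e i * A i k) := by
        refine Finset.sum_congr rfl fun k _ => ?_
        rw [mul_add]
        congr 1
        rw [Finset.mul_sum, Finset.mul_sum, Finset.mul_sum]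
        refine Finset.sum_congr rfl fun i _ => ?_
        field_simp
    _ = (∑ k, e k / Φ) * (Φ * (1 + ε^2/6)) +
          (ε/(2*Φ)) * ∑ k, ∑ i, e k * e i * A i k := by
        rw [Finset.sum_add_distrib, ← Finset.sum_mul, ← Finset.mul_sum]
    _ = Φ * (1 + ε^2/6) := by
        rw [hS, mul_zero, add_zero, ← Finset.sum_div, ← hΦ, div_self hΦpos.ne']
        ring


/-- `gkU A t f` is the vector `U(t) = A X(t)` of the Grigoriadis–Khachiyan process,
where `f : Fin t → Fin n` is the history of sampled indices: `U(0) = 0`,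
`U(t+1) = U(t) + A e_{k(t)}`. -/
noncomputable def gkU {n : ℕ} (A : Matrix (Fin n) (Fin n) ℝ) :
    ∀ t : ℕ, (Fin t → Fin n) → Fin n → ℝ
  | 0, _, _ => 0
  | (t + 1), f, i => gkU A t (Fin.init f) i + A i (f (Fin.last t))

/-- The exponential potential `Φ(t) = ∑ᵢ exp(ε Uᵢ(t)/2)`. -/
noncomputable def gkPhi {n : ℕ} (A : Matrix (Fin n) (Fin n) ℝ) (ε : ℝ)
    (t : ℕ) (f : Fin t → Fin n) : ℝ :=
  ∑ i, Real.exp (ε * gkU A t f i / 2)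

/-- The sampling probabilities `pᵢ(t) = exp(ε Uᵢ(t)/2)/Φ(t)`. -/
noncomputable def gkP {n : ℕ} (A : Matrix (Fin n) (Fin n) ℝ) (ε : ℝ)
    (t : ℕ) (f : Fin t → Fin n) (i : Fin n) : ℝ :=
  Real.exp (ε * gkU A t f i / 2) / gkPhi A ε t f

/-- The probability of observing the history `f` of sampled indices. -/
noncomputable def gkProb {n : ℕ} (A : Matrix (Fin n) (Fin n) ℝ) (ε : ℝ) :
    ∀ t : ℕ, (Fin t → Fin n) → ℝ
  | 0, _ => 1
  | (t + 1), f => gkProb A ε t (Fin.init f) * gkP A ε t (Fin.init f) (f (Fin.last t))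

theorem gk_potential_bound (n : ℕ) (A : Matrix (Fin n) (Fin n) ℝ) (ε : ℝ)
    (hskew : A.transpose = -A) (hbdd : ∀ i k, |A i k| ≤ 1)
    (hε0 : 0 < ε) (hε1 : ε ≤ 1) :
    (∀ (t : ℕ) (f : Fin t → Fin n),
      ∑ k, gkP A ε t f k * gkPhi A ε (t + 1) (Fin.snoc f k) ≤
        gkPhi A ε t f * (1 + ε ^ 2 / 6)) ∧
    (∀ t : ℕ,
      (∑ f : Fin t → Fin n, gkProb A ε t f * gkPhi A ε t f) ≤
          n * (1 + ε ^ 2 / 6) ^ t ∧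
      (n : ℝ) * (1 + ε ^ 2 / 6) ^ t ≤ n * Real.exp (t * ε ^ 2 / 6)) := by
  have part1 : ∀ (t : ℕ) (f : Fin t → Fin n),
      ∑ k, gkP A ε t f k * gkPhi A ε (t + 1) (Fin.snoc f k) ≤
        gkPhi A ε t f * (1 + ε ^ 2 / 6) := by
    intro t f
    have := gk_step n A ε hskew hbdd hε0 hε1 t f (gkU A)
      (fun t f i => by simp [gkU])
    simpa [gkP, gkPhi, div_mul_eq_mul_div, mul_div_assoc] using this
  have hone : (0:ℝ) ≤ 1 + ε ^ 2 / 6 := by positivity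
  have hProbnn : ∀ (t : ℕ) (f : Fin t → Fin n), 0 ≤ gkProb A ε t f := by
    intro t
    induction t with
    | zero => intro f; simp [gkProb]
    | succ t ih =>
      intro f
      refine mul_nonneg (ih _) ?_
      exact div_nonneg (Real.exp_pos _).le
        (Finset.sum_nonneg fun i _ => (Real.exp_pos _).le)
  refine ⟨part1, fun t => ⟨?_, ?_⟩⟩
  · induction t with
    | zero =>
      simp [gkProb, gkPhi, gkU]
    | succ t ih =>
      calc ∑ f : Fin (t+1) → Fin n, gkProb A ε (t+1) f * gkPhi A ε (t+1) f
          = ∑ p : (Fin t → Fin n) × Fin n,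
              gkProb A ε (t+1) (Fin.snoc p.1 p.2) * gkPhi A ε (t+1) (Fin.snoc p.1 p.2) :=
            by
              exact (Fintype.sum_equiv
                ⟨fun p => Fin.snoc p.1 p.2, fun f => (Fin.init f, f (Fin.last t)),
                  fun p => by simp, fun f => by simp⟩
                (fun p => gkProb A ε (t+1) (Fin.snoc p.1 p.2) * gkPhi A ε (t+1) (Fin.snoc p.1 p.2))
                (fun f => gkProb A ε (t+1) f * gkPhi A ε (t+1) f) (fun p => rfl)).symm
        _ = ∑ g : Fin t → Fin n, ∑ k : Fin n,
              gkProb A ε t g * (gkP A ε t g k * gkPhi A ε (t+1) (Fin.snoc g k)) := by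
            rw [Fintype.sum_prod_type]
            refine Finset.sum_congr rfl fun g _ => Finset.sum_congr rfl fun k _ => ?_
            simp [gkProb, Fin.init_snoc, Fin.snoc_last, mul_assoc]
        _ = ∑ g : Fin t → Fin n, gkProb A ε t g *
              ∑ k, gkP A ε t g k * gkPhi A ε (t+1) (Fin.snoc g k) := by
            simp [Finset.mul_sum]
        _ ≤ ∑ g : Fin t → Fin n, gkProb A ε t g * (gkPhi A ε t g * (1 + ε ^ 2 / 6)) :=
            Finset.sum_le_sum fun g _ =>
              mul_le_mul_of_nonneg_left (part1 t g) (hProbnn t g)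
        _ = (∑ g : Fin t → Fin n, gkProb A ε t g * gkPhi A ε t g) * (1 + ε ^ 2 / 6) := by
            rw [Finset.sum_mul]
            exact Finset.sum_congr rfl fun g _ => by ring
        _ ≤ (n * (1 + ε ^ 2 / 6) ^ t) * (1 + ε ^ 2 / 6) :=
            mul_le_mul_of_nonneg_right ih hone
        _ = n * (1 + ε ^ 2 / 6) ^ (t+1) := by ring
  · have h1 : (1 + ε ^ 2 / 6) ^ t ≤ Real.exp (t * ε ^ 2 / 6) := by
      calc (1 + ε ^ 2 / 6) ^ t ≤ (Real.exp (ε ^ 2 / 6)) ^ t := by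
            refine pow_le_pow_left₀ hone ?_ t
            linarith [Real.add_one_le_exp (ε ^ 2 / 6)]
        _ = Real.exp (t * ε ^ 2 / 6) := by
            rw [← Real.exp_nat_mul]
            ring_nf
    exact mul_le_mul_of_nonneg_left h1 (Nat.cast_nonneg n)
end
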